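/- If u is a closed string with |u| ≥ 2, then its longest border occurs exactly twice in u. -/

import Mathlib

variable {α : Type*} [DecidableEq α]

/-- Number of occurrences of `s` as a factor of `w` (starting positions, 0-indexed). -/
def countOcc (s w : List α) : ℕ :=
  ((Finset.range (w.length + 1)).filter (fun i => s <+: w.drop i)).card

/-- `b` is a border of `w`. -/
def IsBorder (b w : List α) : Prop := b ≠ w ∧ b <+: w ∧ b <:+ w

/-- The longest border of `w`. -/
def bord (w : List α) : List α :=
  w.take (((Finset.range w.length).filter (fun k => w.take k <:+ w)).sup id)

/-- A string is closed if its length is one, or it has a nonempty border occurring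
exactly twice in it. -/
def IsClosedStr (w : List α) : Prop :=
  w.length = 1 ∨ ∃ b : List α, b ≠ [] ∧ IsBorder b w ∧ countOcc b w = 2

/-- The longest repeating suffix of `w` (the empty string if none). -/
def lrs (w : List α) : List α :=
  w.drop (w.length -
    ((Finset.range (w.length + 1)).filter
      (fun k => 2 ≤ countOcc (w.drop (w.length - k)) w)).sup id)

/-- `u` is a factor (contiguous substring) of `w`. -/
def IsFactor (u w : List α) : Prop := ∃ s t : List α, w = s ++ u ++ t

/-- The set of all factors of `w`. -/
def factors (w : List α) : Finset (List α) :=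
  (Finset.range (w.length + 1) ×ˢ Finset.range (w.length + 1)).image
    (fun p => (w.drop p.1).take p.2)

/-- The set of distinct closed factors of `w`. -/
noncomputable def closedFactors (w : List α) : Finset (List α) :=
  @Finset.filter _ IsClosedStr (Classical.decPred _) (factors w)

set_option linter.unusedSectionVars false in
lemma drop_sub_of_suffix {b w : List α} (h : b <:+ w) :
    w.drop (w.length - b.length) = b := by
  obtain ⟨t, rfl⟩ := h
  simp

theorem stmt1 (u : List α) (hc : IsClosedStr u) (hlen : 2 ≤ u.length) :
    countOcc (bord u) u = 2 := by
  obtain h1 | ⟨b, hbne, ⟨hbneq, hbpre, hbsuf⟩, hb2⟩ := hc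
  · omega
  have hblt : b.length < u.length := by
    rcases lt_or_eq_of_le hbpre.length_le with h | h
    · exact h
    · exact absurd (hbpre.eq_of_length h) hbneq
  have htb : u.take b.length = b := (List.prefix_iff_eq_take.mp hbpre).symm
  set K := ((Finset.range u.length).filter (fun k => u.take k <:+ u)).sup id with hK
  have hbord : bord u = u.take K := rfl
  have hbS : b.length ∈ (Finset.range u.length).filter (fun k => u.take k <:+ u) := by
    simp only [Finset.mem_filter, Finset.mem_range]
    exact ⟨hblt, by rw [htb]; exact hbsuf⟩
  have hbK : b.length ≤ K := Finset.le_sup (f := id) hbS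
  obtain ⟨k, hkS, hkeq⟩ := Finset.exists_mem_eq_sup _ ⟨_, hbS⟩ (id : ℕ → ℕ)
  rw [← hK] at hkeq
  simp only [Finset.mem_filter, Finset.mem_range, id] at hkS
  have hKlt : K < u.length := hkeq ▸ hkS.1
  have hBsuf : u.take K <:+ u := hkeq ▸ hkS.2
  have hBlen : (u.take K).length = K := by simp; omega
  have hbB : b <+: u.take K := by
    have h : (u.take K).take b.length = b := by
      rw [List.take_take, min_eq_left hbK, htb]
    exact h ▸ List.take_prefix _ _
  -- occurrence set of b
  have hT : (Finset.range (u.length + 1)).filter (fun i => b <+: u.drop i)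
      = {0, u.length - b.length} := by
    refine (Finset.eq_of_subset_of_card_le ?_ ?_).symm
    · intro i hi
      simp only [Finset.mem_insert, Finset.mem_singleton] at hi
      rcases hi with rfl | rfl <;>
        simp only [Finset.mem_filter, Finset.mem_range]
      · exact ⟨by omega, @List.drop_zero _ u ▸ hbpre⟩
      · exact ⟨by omega, (drop_sub_of_suffix hbsuf).symm ▸ List.prefix_refl b⟩
    · have : countOcc b u = 2 := hb2
      rw [countOcc] at this
      rw [this, Finset.card_insert_of_notMem (by simp; omega), Finset.card_singleton]
  have hdropK : u.drop (u.length - K) = u.take K := by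
    have := drop_sub_of_suffix hBsuf
    rwa [hBlen] at this
  have hU : (Finset.range (u.length + 1)).filter (fun i => u.take K <+: u.drop i)
      = {0, u.length - K} := by
    apply Finset.Subset.antisymm
    · intro i hi
      simp only [Finset.mem_filter, Finset.mem_range] at hi
      have hib : i ∈ (Finset.range (u.length + 1)).filter (fun i => b <+: u.drop i) := by
        simp only [Finset.mem_filter, Finset.mem_range]
        exact ⟨hi.1, hbB.trans hi.2⟩
      rw [hT] at hib
      simp only [Finset.mem_insert, Finset.mem_singleton] at hib ⊢
      rcases hib with rfl | rfl
      · exact Or.inl rfl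
      · right
        have hBb : u.take K <+: b := by
          have := hi.2
          rwa [drop_sub_of_suffix hbsuf] at this
        have : K ≤ b.length := hBlen ▸ hBb.length_le
        omega
    · intro i hi
      simp only [Finset.mem_insert, Finset.mem_singleton] at hi
      rcases hi with rfl | rfl <;>
        simp only [Finset.mem_filter, Finset.mem_range]
      · exact ⟨by omega, @List.drop_zero _ u ▸ List.take_prefix _ _⟩
      · exact ⟨by omega, hdropK.symm ▸ List.prefix_refl _⟩
  rw [countOcc, hbord, hU, Finset.card_insert_of_notMem (by simp; omega),
    Finset.card_singleton]
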